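/- For all k ≥ r ≥ 2, the Lagrangian density of the family ℱ_{k+1}^{(r)} satisfies π_λ(ℱ_{k+1}^{(r)}) ≤ (k)_r/k^r; that is, every ℱ_{k+1}^{(r)}-free r-graph H satisfies λ^(1)(H) ≤ (k)_r/k^r. -/

import Mathlib

open Finset

lemma amgm_aux (m : ℕ) {X Y : ℝ} (hX : 0 ≤ X) (hY : 0 ≤ Y) :
    X ^ m * Y * ((m : ℝ) + 1) ^ (m + 1) ≤ ((m : ℝ) * X + Y) ^ (m + 1) := by
  have hm1 : (0:ℝ) < (m:ℝ) + 1 := by positivity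
  have hw : (m:ℝ)/((m:ℝ)+1) + 1/((m:ℝ)+1) = 1 := by field_simp
  have h1 : X ^ ((m:ℝ)/((m:ℝ)+1)) * Y ^ ((1:ℝ)/((m:ℝ)+1))
      ≤ ((m:ℝ)/((m:ℝ)+1)) * X + (1/((m:ℝ)+1)) * Y :=
    Real.geom_mean_le_arith_mean2_weighted (by positivity) (by positivity) hX hY hw
  have h2 := pow_le_pow_left₀ (by positivity) h1 (m + 1)
  have hL : (X ^ ((m:ℝ)/((m:ℝ)+1)) * Y ^ ((1:ℝ)/((m:ℝ)+1))) ^ (m+1) = X ^ m * Y := by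
    rw [mul_pow, ← Real.rpow_natCast (X ^ ((m:ℝ)/((m:ℝ)+1))) (m+1),
      ← Real.rpow_natCast (Y ^ ((1:ℝ)/((m:ℝ)+1))) (m+1),
      ← Real.rpow_mul hX, ← Real.rpow_mul hY]
    have e1 : (m:ℝ)/((m:ℝ)+1) * ((m+1 : ℕ):ℝ) = (m:ℝ) := by push_cast; field_simp
    have e2 : (1:ℝ)/((m:ℝ)+1) * ((m+1 : ℕ):ℝ) = 1 := by push_cast; field_simp
    rw [e1, e2, Real.rpow_one, Real.rpow_natCast]
  have hR : (((m:ℝ)/((m:ℝ)+1)) * X + (1/((m:ℝ)+1)) * Y) ^ (m+1)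
      = ((m:ℝ) * X + Y) ^ (m+1) / ((m:ℝ)+1) ^ (m+1) := by
    rw [← div_pow]; congr 1; field_simp
  rw [hL, hR] at h2
  calc X ^ m * Y * ((m:ℝ)+1)^(m+1)
      ≤ (((m:ℝ) * X + Y) ^ (m+1) / ((m:ℝ)+1) ^ (m+1)) * ((m:ℝ)+1)^(m+1) :=
        mul_le_mul_of_nonneg_right h2 (by positivity)
    _ = ((m:ℝ) * X + Y) ^ (m+1) := by field_simp


lemma key_step (t q : ℕ) {u m : ℝ} (hu : 0 ≤ u) (hm : 0 ≤ m) :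
    (t.choose (q+1) : ℝ) * (u / t) ^ (q+1) + m * (t.choose q : ℝ) * (u / t) ^ q
      ≤ ((t+1).choose (q+1) : ℝ) * ((u + m) / (t+1)) ^ (q+1) := by
  rcases Nat.eq_zero_or_pos t with ht0 | ht
  · subst ht0
    rcases Nat.eq_zero_or_pos q with hq0 | hq
    · subst hq0
      norm_num
      linarith
    · have h1 : (0:ℕ).choose (q+1) = 0 := Nat.choose_eq_zero_of_lt (by omega)
      have h2 : (0:ℕ).choose q = 0 := Nat.choose_eq_zero_of_lt (by omega)
      rw [h1, h2]
      simp only [Nat.cast_zero, zero_mul, mul_zero, add_zero, Nat.cast_ofNat]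
      positivity
  have hT : (0:ℝ) < (t:ℝ) := by exact_mod_cast ht
  by_cases hqt : t < q
  · have h1 : t.choose (q+1) = 0 := Nat.choose_eq_zero_of_lt (by omega)
    have h2 : t.choose q = 0 := Nat.choose_eq_zero_of_lt (by omega)
    rw [h1, h2]
    simp only [Nat.cast_zero, zero_mul, mul_zero, add_zero]
    positivity
  push_neg at hqt
  rcases Nat.eq_zero_or_pos q with hq0 | hq
  · subst hq0
    norm_num [Nat.choose_one_right]
    rw [mul_div_cancel₀ _ (ne_of_gt hT), mul_div_cancel₀ _ (by positivity : ((t:ℝ)+1) ≠ 0)]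
  have hQ : (0:ℝ) < (q:ℝ) := by exact_mod_cast hq
  have hCq : (0:ℝ) < (t.choose q : ℝ) := by exact_mod_cast Nat.choose_pos hqt
  obtain ⟨T, hTdef⟩ : ∃ T : ℝ, T = (t:ℝ) := ⟨_, rfl⟩
  obtain ⟨Q, hQdef⟩ : ∃ Q : ℝ, Q = (q:ℝ) := ⟨_, rfl⟩
  obtain ⟨Cq, hCqdef⟩ : ∃ C : ℝ, C = (t.choose q : ℝ) := ⟨_, rfl⟩
  rw [← hTdef] at hT
  rw [← hQdef] at hQ
  rw [← hCqdef] at hCq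
  rw [← hTdef, ← hCqdef]
  obtain ⟨b, hbdef⟩ : ∃ b : ℝ, b = Cq / T^q := ⟨_, rfl⟩
  obtain ⟨c, hcdef⟩ : ∃ c : ℝ, c = b*Q*(T+1)/((Q+1)*T) := ⟨_, rfl⟩
  obtain ⟨s, hsdef⟩ : ∃ s : ℝ, s = u + m := ⟨_, rfl⟩
  rw [← hsdef]
  have hb : 0 < b := by rw [hbdef]; positivity
  have hc : 0 < c := by rw [hcdef]; positivity
  have hs : 0 ≤ s := by rw [hsdef]; linarith
  have hch : (Q+1) * (t.choose (q+1) : ℝ) = Cq * (T - Q) := by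
    have h := Nat.choose_succ_right_eq t q
    have h2 : ((t.choose (q+1) * (q+1) : ℕ) : ℝ) = ((t.choose q * (t - q) : ℕ) : ℝ) := by
      exact_mod_cast congrArg (Nat.cast : ℕ → ℝ) h
    push_cast [Nat.cast_sub hqt] at h2
    rw [hQdef, hCqdef, hTdef]; linarith
  have hch2 : ((t+1).choose (q+1) : ℝ) = (T+1)*Cq/(Q+1) := by
    rw [eq_div_iff (by positivity)]
    have h := Nat.add_one_mul_choose_eq t q
    have h2 : (((t+1) * t.choose q : ℕ) : ℝ) = (((t+1).choose (q+1) * (q+1) : ℕ) : ℝ) := by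
      exact_mod_cast congrArg (Nat.cast : ℕ → ℝ) h
    push_cast at h2
    rw [hQdef, hCqdef, hTdef]; linarith
  have ha : ((t.choose (q+1) : ℝ)) = (b - c) * T^(q+1) := by
    rw [hcdef, hbdef]
    have hbc : (Cq / T^q - Cq / T^q * Q * (T+1) / ((Q+1)*T)) * T^(q+1)
        = Cq * (T - Q) / (Q+1) := by
      field_simp
      ring
    rw [hbc, eq_div_iff (by positivity)]
    linarith [hch]
  have hCqb : Cq = b * T^q := by rw [hbdef]; field_simp
  have hL : (t.choose (q+1) : ℝ) * (u / T) ^ (q+1) + m * Cq * (u / T) ^ q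
      = u^q * (b*s - c*u) := by
    rw [ha, hCqb, div_pow, div_pow, hsdef]
    field_simp
    ring
  rw [hL]
  obtain ⟨Q1, hQ1⟩ : ∃ x : ℝ, x = Q + 1 := ⟨_, rfl⟩
  obtain ⟨T1, hT1⟩ : ∃ x : ℝ, x = T + 1 := ⟨_, rfl⟩
  have hQ1p : 0 < Q1 := by rw [hQ1]; linarith
  have hT1p : 0 < T1 := by rw [hT1]; linarith
  rw [← hT1]
  rw [← hQ1, ← hT1] at hch2 hcdef
  rcases le_or_gt (b*s - c*u) 0 with hY | hY
  · have h1 : u^q * (b*s - c*u) ≤ 0 := mul_nonpos_of_nonneg_of_nonpos (by positivity) hY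
    have hR : (0:ℝ) ≤ ((t+1).choose (q+1) : ℝ) * (s/T1)^(q+1) := by positivity
    linarith
  · have hY' : 0 ≤ b*s - c*u := le_of_lt hY
    have hamgm := amgm_aux q (X := c*u/Q) (Y := b*s - c*u) (by positivity) hY'
    rw [← hQdef] at hamgm
    have harg : Q * (c*u/Q) + (b*s - c*u) = b*s := by field_simp; ring
    rw [harg, ← hQ1] at hamgm
    have he : Q1*T/(T1*b) * (c*u/Q) = u := by
      rw [hcdef]; field_simp
    have he2 : Q1*T/(T1*b) * (b*s) = Q1*T*s/T1 := by
      field_simp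
    calc u^q * (b*s - c*u)
        = (Q1*T/(T1*b) * (c*u/Q))^q * (b*s - c*u) := by rw [he]
      _ = (Q1*T/(T1*b))^q * ((c*u/Q)^q * (b*s - c*u)) := by
          rw [mul_pow]; ring
      _ ≤ (Q1*T/(T1*b))^q * ((b*s)^(q+1)/Q1^(q+1)) := by
          apply mul_le_mul_of_nonneg_left _ (by positivity)
          rw [le_div_iff₀ (by positivity)]
          exact hamgm
      _ = (Q1*T/(T1*b) * (b*s))^q * (b*s) / Q1^(q+1) := by
          rw [mul_pow (Q1*T/(T1*b)) (b*s), pow_succ (b*s) q]; ring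
      _ = (Q1*T*s/T1)^q * (b*s) / Q1^(q+1) := by rw [he2]
      _ = ((t+1).choose (q+1) : ℝ) * (s/T1)^(q+1) := by
          rw [hch2, hbdef]
          field_simp
          rw [div_pow, div_pow]
          field_simp
          ring

lemma maclaurin {α : Type*} [DecidableEq α] :
    ∀ (t : ℕ) (S : Finset α), S.card = t → ∀ (r : ℕ) (x : α → ℝ), (∀ i, 0 ≤ x i) →
    ∑ e ∈ S.powersetCard r, ∏ v ∈ e, x v ≤ (t.choose r : ℝ) * ((∑ i ∈ S, x i) / t) ^ r := by
  intro t
  induction t with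
  | zero =>
    intro S hS r x hx
    rw [Finset.card_eq_zero] at hS
    subst hS
    cases r with
    | zero => simp
    | succ q => rw [Finset.powersetCard_eq_empty.mpr (by simp)]; simp
  | succ t ih =>
    intro S hS r x hx
    cases r with
    | zero => simp
    | succ q =>
      have hSne : S.Nonempty := by rw [← Finset.card_pos, hS]; omega
      obtain ⟨i, hi⟩ := hSne
      have hins : S = insert i (S.erase i) := (Finset.insert_erase hi).symm
      have hnotmem : i ∉ S.erase i := Finset.notMem_erase i S
      have hcard : (S.erase i).card = t := by
        rw [Finset.card_erase_of_mem hi, hS]; omega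
      rw [hins, Finset.powersetCard_succ_insert hnotmem]
      have hdisj : Disjoint (Finset.powersetCard (q+1) (S.erase i))
          ((Finset.powersetCard q (S.erase i)).image (insert i)) := by
        rw [Finset.disjoint_right]
        intro e he hee
        obtain ⟨e', he', rfl⟩ := Finset.mem_image.mp he
        have : i ∈ (S.erase i) := Finset.mem_powersetCard.mp hee |>.1 (Finset.mem_insert_self i e')
        exact hnotmem this
      rw [Finset.sum_union hdisj]
      have himg : ∑ e ∈ (Finset.powersetCard q (S.erase i)).image (insert i), ∏ v ∈ e, x v
          = x i * ∑ e ∈ Finset.powersetCard q (S.erase i), ∏ v ∈ e, x v := by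
        rw [Finset.sum_image, Finset.mul_sum]
        · apply Finset.sum_congr rfl
          intro e he
          have hie : i ∉ e := fun hh => hnotmem ((Finset.mem_powersetCard.mp he).1 hh)
          rw [Finset.prod_insert hie]
        · intro e he e' he' hee
          have hie : i ∉ e := fun hh => hnotmem ((Finset.mem_powersetCard.mp he).1 hh)
          have hie' : i ∉ e' := fun hh => hnotmem ((Finset.mem_powersetCard.mp he').1 hh)
          rw [← Finset.erase_insert hie, ← Finset.erase_insert hie', hee]
      rw [himg]
      have hsum : ∑ v ∈ insert i (S.erase i), x v = (∑ v ∈ S.erase i, x v) + x i := by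
        rw [Finset.sum_insert hnotmem]; ring
      rw [hsum]
      have h1 := ih (S.erase i) hcard (q+1) x hx
      have h2 := ih (S.erase i) hcard q x hx
      have hxi := hx i
      have husum : 0 ≤ ∑ v ∈ S.erase i, x v := Finset.sum_nonneg fun v _ => hx v
      have hkey := key_step t q husum hxi
      push_cast
      calc (∑ e ∈ Finset.powersetCard (q+1) (S.erase i), ∏ v ∈ e, x v)
            + x i * ∑ e ∈ Finset.powersetCard q (S.erase i), ∏ v ∈ e, x v
          ≤ (t.choose (q+1) : ℝ) * ((∑ v ∈ S.erase i, x v) / t) ^ (q+1)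
            + x i * ((t.choose q : ℝ) * ((∑ v ∈ S.erase i, x v) / t) ^ q) := by
            apply add_le_add h1
            exact mul_le_mul_of_nonneg_left h2 hxi
        _ ≤ ((t+1).choose (q+1) : ℝ) * (((∑ v ∈ S.erase i, x v) + x i) / (t+1)) ^ (q+1) := by
            have := key_step t q husum hxi
            linarith [this]

lemma shift_ineq {n : ℕ} (E : Finset (Finset (Fin n))) (x : Fin n → ℝ)
    (hx : ∀ v, 0 ≤ x v) (i j : Fin n) (hij : i ≠ j)
    (hnc : ∀ e ∈ E, i ∈ e → j ∉ e)
    (hB : ∑ e ∈ E.filter (fun e => j ∈ e), ∏ v ∈ e.erase j, x v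
        ≤ ∑ e ∈ E.filter (fun e => i ∈ e), ∏ v ∈ e.erase i, x v) :
    ∑ e ∈ E, ∏ v ∈ e, x v ≤
      ∑ e ∈ E, ∏ v ∈ e, (Function.update (Function.update x j 0) i (x i + x j)) v := by
  set x' : Fin n → ℝ := Function.update (Function.update x j 0) i (x i + x j) with hx'def
  have hx'i : x' i = x i + x j := by rw [hx'def]; simp
  have hx'j : x' j = 0 := by
    rw [hx'def]
    rw [Function.update_of_ne (Ne.symm hij) _ _]
    simp
  have hx'v : ∀ v, v ≠ i → v ≠ j → x' v = x v := by
    intro v hvi hvj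
    rw [hx'def, Function.update_of_ne hvi, Function.update_of_ne hvj]
  -- split sums into i ∈ e, (i ∉ e ∧ j ∈ e), (i ∉ e ∧ j ∉ e)
  have hsplit : ∀ y : Fin n → ℝ,
      ∑ e ∈ E, ∏ v ∈ e, y v
        = (∑ e ∈ E.filter (fun e => i ∈ e), ∏ v ∈ e, y v)
          + ((∑ e ∈ (E.filter (fun e => i ∉ e)).filter (fun e => j ∈ e), ∏ v ∈ e, y v)
          + (∑ e ∈ (E.filter (fun e => i ∉ e)).filter (fun e => j ∉ e), ∏ v ∈ e, y v)) := by
    intro y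
    rw [← Finset.sum_filter_add_sum_filter_not E (fun e => i ∈ e),
      ← Finset.sum_filter_add_sum_filter_not (E.filter (fun e => i ∉ e)) (fun e => j ∈ e)]
  have hfilter : (E.filter (fun e => i ∉ e)).filter (fun e => j ∈ e)
      = E.filter (fun e => j ∈ e) := by
    rw [Finset.filter_filter]
    apply Finset.filter_congr
    intro e he
    simp only [and_iff_right_iff_imp]
    intro hje hie
    exact hnc e he hie hje
  rw [hsplit x, hsplit x', hfilter]
  -- part 3 : products equal
  have h3 : ∑ e ∈ (E.filter (fun e => i ∉ e)).filter (fun e => j ∉ e), ∏ v ∈ e, x' v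
      = ∑ e ∈ (E.filter (fun e => i ∉ e)).filter (fun e => j ∉ e), ∏ v ∈ e, x v := by
    apply Finset.sum_congr rfl
    intro e he
    simp only [Finset.mem_filter] at he
    exact Finset.prod_congr rfl fun v hv =>
      hx'v v (fun h => he.1.2 (h ▸ hv)) (fun h => he.2 (h ▸ hv))
  -- part 2 for x' : zero
  have h2' : ∑ e ∈ E.filter (fun e => j ∈ e), ∏ v ∈ e, x' v = 0 := by
    apply Finset.sum_eq_zero
    intro e he
    exact Finset.prod_eq_zero (Finset.mem_filter.mp he).2 hx'j
  -- part 2 for x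
  have h2 : ∑ e ∈ E.filter (fun e => j ∈ e), ∏ v ∈ e, x v
      = x j * ∑ e ∈ E.filter (fun e => j ∈ e), ∏ v ∈ e.erase j, x v := by
    rw [Finset.mul_sum]
    apply Finset.sum_congr rfl
    intro e he
    rw [← Finset.mul_prod_erase e x (Finset.mem_filter.mp he).2]
  -- part 1
  have h1 : ∑ e ∈ E.filter (fun e => i ∈ e), ∏ v ∈ e, x v
      = x i * ∑ e ∈ E.filter (fun e => i ∈ e), ∏ v ∈ e.erase i, x v := by
    rw [Finset.mul_sum]
    apply Finset.sum_congr rfl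
    intro e he
    rw [← Finset.mul_prod_erase e x (Finset.mem_filter.mp he).2]
  have h1' : ∑ e ∈ E.filter (fun e => i ∈ e), ∏ v ∈ e, x' v
      = (x i + x j) * ∑ e ∈ E.filter (fun e => i ∈ e), ∏ v ∈ e.erase i, x v := by
    rw [Finset.mul_sum]
    apply Finset.sum_congr rfl
    intro e he
    have hie : i ∈ e := (Finset.mem_filter.mp he).2
    have hje : j ∉ e := hnc e (Finset.mem_filter.mp he).1 hie
    rw [← Finset.mul_prod_erase e x' hie, hx'i]
    congr 1
    apply Finset.prod_congr rfl
    intro v hv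
    exact hx'v v (Finset.ne_of_mem_erase hv) (fun h => hje (h ▸ Finset.mem_of_mem_erase hv))
  rw [h3, h2', h1, h1', h2]
  have hBnn := mul_le_mul_of_nonneg_left hB (hx j)
  nlinarith [hBnn]

lemma descFact_mono (r t k : ℕ) (htk : t ≤ k) (hk : 0 < k) :
    (t.descFactorial r : ℝ) / (t : ℝ) ^ r ≤ (k.descFactorial r : ℝ) / (k : ℝ) ^ r := by
  rcases lt_or_ge t r with htr | hrt
  · rw [Nat.descFactorial_eq_zero_iff_lt.mpr htr]
    have : (0:ℝ) ≤ (k.descFactorial r : ℝ) / (k : ℝ) ^ r := by positivity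
    simpa using this
  · rcases Nat.eq_zero_or_pos r with hr0 | hrpos
    · subst hr0; simp
    have ht : 0 < t := lt_of_lt_of_le hrpos hrt
    have hT : (0:ℝ) < (t:ℝ) := by exact_mod_cast ht
    have hK : (0:ℝ) < (k:ℝ) := by exact_mod_cast hk
    rw [Nat.descFactorial_eq_prod_range, Nat.descFactorial_eq_prod_range]
    push_cast
    rw [show ((t:ℝ))^r = ∏ _i ∈ Finset.range r, (t:ℝ) from by rw [Finset.prod_const, Finset.card_range],
      show ((k:ℝ))^r = ∏ _i ∈ Finset.range r, (k:ℝ) from by rw [Finset.prod_const, Finset.card_range],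
      ← Finset.prod_div_distrib, ← Finset.prod_div_distrib]
    apply Finset.prod_le_prod
    · intro i hi
      have hit : i ≤ t := le_trans (le_of_lt (Finset.mem_range.mp hi)) hrt
      have : ((t - i : ℕ) : ℝ) = (t:ℝ) - i := by
        push_cast [Nat.cast_sub hit]; ring
      rw [this]
      have h2 : (i:ℝ) ≤ (t:ℝ) := by exact_mod_cast hit
      apply div_nonneg (by linarith) (le_of_lt hT)
    · intro i hi
      have hit : i ≤ t := le_trans (le_of_lt (Finset.mem_range.mp hi)) hrt
      have hik : i ≤ k := le_trans hit htk
      rw [show ((t - i : ℕ) : ℝ) = (t:ℝ) - i from by push_cast [Nat.cast_sub hit]; ring,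
        show ((k - i : ℕ) : ℝ) = (k:ℝ) - i from by push_cast [Nat.cast_sub hik]; ring,
        div_le_div_iff₀ hT hK]
      have htk' : (t:ℝ) ≤ (k:ℝ) := by exact_mod_cast htk
      have hi0 : (0:ℝ) ≤ (i:ℝ) := by positivity
      nlinarith


/-- The `p`-spectral radius of the `r`-uniform hypergraph on vertex set `Fin n`
with edge set `E`: the maximum of `r! * ∑_{e ∈ E} ∏_{v ∈ e} x v` over all
vectors `x` with `‖x‖_p = 1` (equivalently `∑ |x i| ^ p = 1`). -/
noncomputable def specRad (r n : ℕ) (E : Finset (Finset (Fin n))) (p : ℝ) : ℝ :=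
  sSup { y : ℝ | ∃ x : Fin n → ℝ, (∑ i : Fin n, |x i| ^ p) = 1 ∧
    y = (Nat.factorial r : ℝ) * ∑ e ∈ E, ∏ v ∈ e, x v }

/-- The edge set of the Turán `r`-graph `T_r(n,k)`: the complete `k`-partite
`r`-graph on `Fin n` whose parts (the residue classes modulo `k`) are as equal
as possible; its edges are all `r`-sets meeting each part in at most one vertex. -/
def turanEdges (r n k : ℕ) : Finset (Finset (Fin n)) :=
  Finset.univ.filter fun e : Finset (Fin n) =>
    e.card = r ∧ ∀ u ∈ e, ∀ v ∈ e, u ≠ v → (u : ℕ) % k ≠ (v : ℕ) % k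

/-- The `r`-graph on `Fin n` with edge set `E` is isomorphic to `T_r(n,k)`. -/
def IsoToTuran (r n k : ℕ) (E : Finset (Finset (Fin n))) : Prop :=
  ∃ σ : Equiv.Perm (Fin n),
    ∀ e : Finset (Fin n), e ∈ E ↔ e.image (fun v => σ v) ∈ turanEdges r n k

/-- The `r`-graph on `Fin n` with edge set `E` can be transformed into (a copy of)
`T_r(n,k)` by adding and deleting at most `m` edges. -/
def CloseToTuran (r n k : ℕ) (E : Finset (Finset (Fin n))) (m : ℝ) : Prop :=
  ∃ σ : Equiv.Perm (Fin n),
    ((symmDiff E ((turanEdges r n k).image fun e => e.image fun v => σ v)).card : ℝ) ≤ m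

/-- `E` contains a copy of the expanded clique `H_{k+1}^{(r)}`, the `r`-graph obtained
from `K_{k+1}` by enlarging each edge with a new set of `r - 2` vertices, the enlarging
sets being pairwise disjoint and disjoint from the core. Here `c` lists the `k+1` core
vertices and `g i j` (for `i < j`) is the edge containing the core pair `{c i, c j}`. -/
def ContainsExpandedClique (r k : ℕ) {n : ℕ} (E : Finset (Finset (Fin n))) : Prop :=
  ∃ (c : Fin (k + 1) ↪ Fin n) (g : Fin (k + 1) → Fin (k + 1) → Finset (Fin n)),
    (∀ i j : Fin (k + 1), i < j →
      g i j ∈ E ∧ (g i j).card = r ∧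
      g i j ∩ Finset.univ.image (fun i => c i) = {c i, c j}) ∧
    (∀ i j i' j' : Fin (k + 1), i < j → i' < j' → (i, j) ≠ (i', j') →
      g i j ∩ g i' j' ⊆ Finset.univ.image (fun i => c i))

/-- `E` contains a copy of the generalized fan `F_{k+1}^{(r)}`, whose edges are `[r]`
together with `E_{ij} ∪ {i,j}` over all pairs `{i,j} ∈ C([k+1],2) \ C([r],2)`, where the
`E_{ij}` are pairwise disjoint `(r-2)`-sets disjoint from the core `[k+1]`. -/
def ContainsGenFan (r k : ℕ) {n : ℕ} (E : Finset (Finset (Fin n))) : Prop :=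
  ∃ (c : Fin (k + 1) ↪ Fin n) (g : Fin (k + 1) → Fin (k + 1) → Finset (Fin n)),
    ((Finset.univ.filter fun i : Fin (k + 1) => (i : ℕ) < r).image (fun i => c i) ∈ E) ∧
    (∀ i j : Fin (k + 1), i < j → ¬((i : ℕ) < r ∧ (j : ℕ) < r) →
      g i j ∈ E ∧ (g i j).card = r ∧
      g i j ∩ Finset.univ.image (fun i => c i) = {c i, c j}) ∧
    (∀ i j i' j' : Fin (k + 1), i < j → i' < j' → (i, j) ≠ (i', j') →
      ¬((i : ℕ) < r ∧ (j : ℕ) < r) → ¬((i' : ℕ) < r ∧ (j' : ℕ) < r) →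
      g i j ∩ g i' j' ⊆ Finset.univ.image (fun i => c i))

/-- `E` contains a member of the family `𝒦_t^{(r)}` as a subgraph; equivalently,
there is a `t`-set `C` of vertices (the core) every pair of which is covered by an
edge of `E`. -/
def ContainsKFam (t : ℕ) {n : ℕ} (E : Finset (Finset (Fin n))) : Prop :=
  ∃ C : Finset (Fin n), C.card = t ∧
    ∀ u ∈ C, ∀ v ∈ C, u ≠ v → ∃ e ∈ E, u ∈ e ∧ v ∈ e

/-- `E` contains a member of the family `ℱ_t^{(r)}` as a subgraph; equivalently,
there is a `t`-set `C` of vertices (the core) such that some edge of `E` lies entirely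
inside `C` and every pair of vertices of `C` is covered by an edge of `E`. -/
def ContainsFFam (t : ℕ) {n : ℕ} (E : Finset (Finset (Fin n))) : Prop :=
  ∃ C : Finset (Fin n), C.card = t ∧ (∃ e ∈ E, e ⊆ C) ∧
    ∀ u ∈ C, ∀ v ∈ C, u ≠ v → ∃ e ∈ E, u ∈ e ∧ v ∈ e

/-- `E` contains a Berge-`K_t`: distinct core vertices `c 0, …, c (t-1)` and
pairwise distinct edges `φ i j` (for `i < j`) with `{c i, c j} ⊆ φ i j`. -/
def ContainsBergeClique (t : ℕ) {n : ℕ} (E : Finset (Finset (Fin n))) : Prop :=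
  ∃ (c : Fin t ↪ Fin n) (φ : Fin t → Fin t → Finset (Fin n)),
    (∀ i j : Fin t, i < j → φ i j ∈ E ∧ c i ∈ φ i j ∧ c j ∈ φ i j) ∧
    (∀ i j i' j' : Fin t, i < j → i' < j' → (i, j) ≠ (i', j') → φ i j ≠ φ i' j')

/-- `E` (on `Fin n`) contains a copy of the hypergraph `F` (with vertices in `ℕ`). -/
def ContainsCopy {n : ℕ} (E : Finset (Finset (Fin n))) (F : Finset (Finset ℕ)) : Prop :=
  ∃ f : ℕ → Fin n, Set.InjOn f ↑(F.biUnion id) ∧ ∀ e ∈ F, e.image f ∈ E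

/-- `E` is `𝓕`-free for the family `𝓕` of hypergraphs. -/
def FamFree {n : ℕ} (E : Finset (Finset (Fin n))) (𝓕 : Set (Finset (Finset ℕ))) : Prop :=
  ∀ F ∈ 𝓕, ¬ ContainsCopy E F

/-- The Lagrangian density `π_λ(𝓕)`: the supremum of `λ^(1)(H)` over all
`𝓕`-free `r`-graphs `H`. -/
noncomputable def lagrangianDensity (r : ℕ) (𝓕 : Set (Finset (Finset ℕ))) : ℝ :=
  sSup { y : ℝ | ∃ (m : ℕ) (E : Finset (Finset (Fin m))),
    (∀ e ∈ E, e.card = r) ∧ FamFree E 𝓕 ∧ y = specRad r m E 1 }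

/-- The family `𝓕` of `r`-graphs is (edge-)stable with respect to `T_r(n,k)`. -/
def StableFamily (r k : ℕ) (𝓕 : Set (Finset (Finset ℕ))) : Prop :=
  ∀ ε : ℝ, 0 < ε → ∃ δ : ℝ, 0 < δ ∧ ∃ n₀ : ℕ, ∀ n : ℕ, n₀ ≤ n →
    ∀ E : Finset (Finset (Fin n)), (∀ e ∈ E, e.card = r) → FamFree E 𝓕 →
    (1 - δ) * ((Nat.descFactorial k r : ℝ) / (k : ℝ) ^ r) * (n.choose r : ℝ) ≤ (E.card : ℝ) →
    CloseToTuran r n k E (ε * (n.choose r : ℝ))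

/-- The family `𝓕` of `r`-graphs is spectrally stable with respect to `T_r(n,k)`,
for the given `p`. -/
def SpectrallyStableFamily (p : ℝ) (r k : ℕ) (𝓕 : Set (Finset (Finset ℕ))) : Prop :=
  ∀ ε : ℝ, 0 < ε → ∃ δ : ℝ, 0 < δ ∧ ∃ n₀ : ℕ, ∀ n : ℕ, n₀ ≤ n →
    ∀ E : Finset (Finset (Fin n)), (∀ e ∈ E, e.card = r) → FamFree E 𝓕 →
    (1 - δ) * ((Nat.descFactorial k r : ℝ) / (k : ℝ) ^ r) * (n : ℝ) ^ ((r : ℝ) * (1 - 1 / p))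
      < specRad r n E p →
    CloseToTuran r n k E (ε * (n.choose r : ℝ))

/-- The codegree of `u` and `v`: the number of edges containing both. -/
def codeg {n : ℕ} (E : Finset (Finset (Fin n))) (u v : Fin n) : ℕ :=
  (E.filter fun e => u ∈ e ∧ v ∈ e).card

/-- For a partition of `Fin n` into `k` parts given by `P : Fin n → Fin k`,
`partWeight E P = ∑_{e ∈ E} #{i : e ∩ V_i ≠ ∅}`. -/
def partWeight {n k : ℕ} (E : Finset (Finset (Fin n))) (P : Fin n → Fin k) : ℕ :=
  ∑ e ∈ E, (e.image P).card

/-- Proposition 3.5: for `k ≥ r ≥ 2`, every `ℱ_{k+1}^{(r)}`-free `r`-graph `H`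
satisfies `λ^(1)(H) ≤ (k)_r / k^r`; hence `π_λ(ℱ_{k+1}^{(r)}) ≤ (k)_r / k^r`. -/
theorem lagrangian_FFam_free (k r : ℕ) (hr : 2 ≤ r) (hrk : r ≤ k)
    (n : ℕ) (E : Finset (Finset (Fin n))) (hunif : ∀ e ∈ E, e.card = r)
    (hfree : ¬ ContainsFFam (k + 1) E) :
    specRad r n E 1 ≤ (Nat.descFactorial k r : ℝ) / (k : ℝ) ^ r := by
  classical
  have hk : 0 < k := by omega
  set B : ℝ := (Nat.descFactorial k r : ℝ) / (k : ℝ) ^ r with hBdef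
  have hB0 : (0:ℝ) ≤ B := by positivity
  have bnd : ∀ N : ℕ, ∀ x : Fin n → ℝ, (∀ i, 0 ≤ x i) → (∑ i, x i) = 1 →
      (Finset.univ.filter fun i => x i ≠ 0).card ≤ N →
      (Nat.factorial r : ℝ) * ∑ e ∈ E, ∏ v ∈ e, x v ≤ B := by
    intro N
    induction N with
    | zero =>
      intro x hx hsum hcard
      exfalso
      have hempty : (Finset.univ.filter fun i => x i ≠ 0) = ∅ :=
        Finset.card_eq_zero.mp (Nat.le_zero.mp hcard)
      have hzero : ∀ i : Fin n, x i = 0 := by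
        intro i
        by_contra hne
        have : i ∈ Finset.univ.filter fun i => x i ≠ 0 :=
          Finset.mem_filter.mpr ⟨Finset.mem_univ i, hne⟩
        rw [hempty] at this
        exact absurd this (Finset.notMem_empty i)
      rw [Finset.sum_congr rfl (fun i _ => hzero i)] at hsum
      simp at hsum
    | succ N ih =>
      intro x hx hsum hcard
      set S := Finset.univ.filter fun i => x i ≠ 0 with hSdef
      by_cases hcov : ∀ i ∈ S, ∀ j ∈ S, i ≠ j → ∃ e ∈ E, i ∈ e ∧ j ∈ e
      · by_cases hF : ∑ e ∈ E, ∏ v ∈ e, x v ≤ 0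
        · calc (Nat.factorial r : ℝ) * ∑ e ∈ E, ∏ v ∈ e, x v ≤ 0 :=
              mul_nonpos_of_nonneg_of_nonpos (by positivity) hF
            _ ≤ B := hB0
        · push_neg at hF
          by_cases hScard : k + 1 ≤ S.card
          · exfalso
            have hex : ∃ e ∈ E, 0 < ∏ v ∈ e, x v := by
              by_contra h
              push_neg at h
              have := Finset.sum_nonpos h
              linarith
            obtain ⟨e, heE, hepos⟩ := hex
            have heS : e ⊆ S := by
              intro v hv
              refine Finset.mem_filter.mpr ⟨Finset.mem_univ v, ?_⟩
              intro h0
              rw [Finset.prod_eq_zero hv h0] at hepos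
              exact lt_irrefl 0 hepos
            have hecard : e.card ≤ k + 1 := by rw [hunif e heE]; omega
            obtain ⟨C, heC, hCS, hCcard⟩ := Finset.exists_subsuperset_card_eq heS hecard hScard
            exact hfree ⟨C, hCcard, ⟨e, heE, heC⟩,
              fun u hu v hv huv => hcov u (hCS hu) v (hCS hv) huv⟩
          · push_neg at hScard
            have hSk : S.card ≤ k := by omega
            have hSsub : ∑ e ∈ E, ∏ v ∈ e, x v ≤ ∑ e ∈ S.powersetCard r, ∏ v ∈ e, x v := by
              rw [← Finset.sum_filter_add_sum_filter_not E (fun e => e ⊆ S)]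
              have hz : ∑ e ∈ E.filter (fun e => ¬ e ⊆ S), ∏ v ∈ e, x v = 0 := by
                apply Finset.sum_eq_zero
                intro e he
                simp only [Finset.mem_filter] at he
                obtain ⟨v, hv, hvS⟩ := Finset.not_subset.mp he.2
                have hxv : x v = 0 := by
                  by_contra hne
                  exact hvS (Finset.mem_filter.mpr ⟨Finset.mem_univ v, hne⟩)
                exact Finset.prod_eq_zero hv hxv
              rw [hz, add_zero]
              apply Finset.sum_le_sum_of_subset_of_nonneg
              · intro e he
                simp only [Finset.mem_filter] at he
                exact Finset.mem_powersetCard.mpr ⟨he.2, hunif e he.1⟩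
              · intro e _ _
                exact Finset.prod_nonneg fun v _ => hx v
            have hmac := maclaurin S.card S rfl r x hx
            have hsumS : ∑ i ∈ S, x i = 1 := by
              rw [hSdef, Finset.sum_filter_ne_zero]
              exact hsum
            rw [hsumS] at hmac
            have hstep : (Nat.factorial r : ℝ) * ∑ e ∈ E, ∏ v ∈ e, x v
                ≤ (Nat.factorial r : ℝ) * ((S.card.choose r : ℝ) * ((1:ℝ)/S.card)^r) :=
              mul_le_mul_of_nonneg_left (le_trans hSsub hmac) (by positivity)
            refine le_trans hstep ?_
            have heq : (Nat.factorial r : ℝ) * ((S.card.choose r : ℝ) * ((1:ℝ)/S.card)^r)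
                = (S.card.descFactorial r : ℝ) / (S.card : ℝ)^r := by
              rw [Nat.descFactorial_eq_factorial_mul_choose]
              push_cast
              rw [div_pow, one_pow]
              ring
            rw [heq]
            exact descFact_mono r S.card k hSk hk
      · push_neg at hcov
        obtain ⟨i, hiS, j, hjS, hij, hnc⟩ := hcov
        have step : ∀ i j : Fin n, i ∈ S → j ∈ S → i ≠ j →
            (∀ e ∈ E, i ∈ e → j ∉ e) →
            (∑ e ∈ E.filter (fun e => j ∈ e), ∏ v ∈ e.erase j, x v
              ≤ ∑ e ∈ E.filter (fun e => i ∈ e), ∏ v ∈ e.erase i, x v) →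
            (Nat.factorial r : ℝ) * ∑ e ∈ E, ∏ v ∈ e, x v ≤ B := by
          intro i j hiS hjS hij hnc hBle
          set x' : Fin n → ℝ := Function.update (Function.update x j 0) i (x i + x j)
            with hx'def
          have hx'i : x' i = x i + x j := by rw [hx'def]; simp
          have hx'j : x' j = 0 := by
            rw [hx'def, Function.update_of_ne (Ne.symm hij) _ _]
            simp
          have hx'v : ∀ v, v ≠ i → v ≠ j → x' v = x v := by
            intro v hvi hvj
            rw [hx'def, Function.update_of_ne hvi, Function.update_of_ne hvj]
          have hle := shift_ineq E x hx i j hij hnc hBle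
          have hx' : ∀ v, 0 ≤ x' v := by
            intro v
            rcases eq_or_ne v i with rfl | hvi
            · rw [hx'i]; exact add_nonneg (hx v) (hx j)
            rcases eq_or_ne v j with rfl | hvj
            · rw [hx'j]
            · rw [hx'v v hvi hvj]; exact hx v
          have hsum' : ∑ v, x' v = 1 := by
            rw [hx'def, Finset.sum_update_of_mem (Finset.mem_univ i),
              ← Finset.erase_eq,
              Finset.sum_update_of_mem
                (Finset.mem_erase.mpr ⟨Ne.symm hij, Finset.mem_univ j⟩),
              ← Finset.erase_eq, zero_add]
            rw [← hsum, ← Finset.add_sum_erase _ x (Finset.mem_univ i),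
              ← Finset.add_sum_erase _ x
                (Finset.mem_erase.mpr ⟨Ne.symm hij, Finset.mem_univ j⟩)]
            ring
          have hsupp' : (Finset.univ.filter fun v => x' v ≠ 0) ⊆ S.erase j := by
            intro v hv
            have hvne : x' v ≠ 0 := (Finset.mem_filter.mp hv).2
            rcases eq_or_ne v j with rfl | hvj
            · exact absurd hx'j hvne
            refine Finset.mem_erase.mpr ⟨hvj, ?_⟩
            rcases eq_or_ne v i with rfl | hvi
            · exact hiS
            · refine Finset.mem_filter.mpr ⟨Finset.mem_univ v, ?_⟩
              rw [← hx'v v hvi hvj]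
              exact hvne
          have hcard' : (Finset.univ.filter fun v => x' v ≠ 0).card ≤ N := by
            have h1 := Finset.card_le_card hsupp'
            rw [Finset.card_erase_of_mem hjS] at h1
            omega
          calc (Nat.factorial r : ℝ) * ∑ e ∈ E, ∏ v ∈ e, x v
              ≤ (Nat.factorial r : ℝ) * ∑ e ∈ E, ∏ v ∈ e, x' v :=
                mul_le_mul_of_nonneg_left hle (by positivity)
            _ ≤ B := ih x' hx' hsum' hcard'
        rcases le_total
            (∑ e ∈ E.filter (fun e => j ∈ e), ∏ v ∈ e.erase j, x v)
            (∑ e ∈ E.filter (fun e => i ∈ e), ∏ v ∈ e.erase i, x v) with h | h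
        · exact step i j hiS hjS hij hnc h
        · exact step j i hjS hiS (Ne.symm hij)
            (fun e he hje hie => hnc e he hie hje) h
  refine Real.sSup_le ?_ hB0
  rintro y ⟨x, hx1, rfl⟩
  have hsum : ∑ i, |x i| = 1 := by
    rw [← hx1]
    exact Finset.sum_congr rfl fun i _ => (Real.rpow_one _).symm
  have hle : ∑ e ∈ E, ∏ v ∈ e, x v ≤ ∑ e ∈ E, ∏ v ∈ e, |x v| := by
    apply Finset.sum_le_sum
    intro e _
    calc ∏ v ∈ e, x v ≤ |∏ v ∈ e, x v| := le_abs_self _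
      _ = ∏ v ∈ e, |x v| := Finset.abs_prod _ _
  calc (Nat.factorial r : ℝ) * ∑ e ∈ E, ∏ v ∈ e, x v
      ≤ (Nat.factorial r : ℝ) * ∑ e ∈ E, ∏ v ∈ e, |x v| :=
        mul_le_mul_of_nonneg_left hle (by positivity)
    _ ≤ B := bnd n (fun i => |x i|) (fun i => abs_nonneg _) hsum
        (le_trans (Finset.card_filter_le _ _) (by simp))
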